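/- Every 3×3 Hermitian quaternionic matrix X can be transformed to a real diagonal matrix by some A ∈ Sp(3): there exists A with AᴴA = E such that A X Aᴴ = diag(ξ₁, ξ₂, ξ₃) with ξᵢ ∈ ℝ. -/

import Mathlib

noncomputable section
open Matrix
open scoped RealInnerProductSpace

abbrev ℍ := Quaternion ℝ

namespace QH3

abbrev V := PiLp 2 (fun _ : Fin 3 => ℍ)

lemma re_mul_comm (a b : ℍ) : (a * b).re = (b * a).re := by
  simp [Quaternion.re_mul]; ring

lemma re_cyc (a b c : ℍ) : (a * b * c).re = (c * a * b).re := by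
  rw [re_mul_comm, ← mul_assoc]

lemma re_sum {ι : Type*} (s : Finset ι) (f : ι → ℍ) :
    (∑ i ∈ s, f i).re = ∑ i ∈ s, (f i).re :=
  map_sum (QuaternionAlgebra.reₗ (R:=ℝ) (c₁:=-1) (c₂:=0) (c₃:=-1)) f s

/-- quaternionic inner product -/
def qInner (v w : Fin 3 → ℍ) : ℍ := ∑ i, star (v i) * w i

lemma star_qInner (v w : Fin 3 → ℍ) : star (qInner v w) = qInner w v := by
  simp [qInner, mul_comm]

lemma inner_eq_qInner (v w : V) : ⟪v, w⟫ = (qInner w v).re := by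
  simp only [PiLp.inner_apply, Quaternion.inner_def, qInner]
  rw [re_sum]
  exact Finset.sum_congr rfl fun i _ => re_mul_comm _ _


/-- right scalar multiplication on vectors -/
def mulr (x : V) (q : ℍ) : V := WithLp.toLp 2 (fun i => x i * q)

lemma mulr_smul (x : V) (q : ℍ) (μ : ℝ) : mulr (μ • x) q = μ • mulr x q := by
  ext1 i
  simp [mulr, smul_mul_assoc]

variable (X : Matrix (Fin 3) (Fin 3) ℍ)

/-- the matrix as a real-linear map -/
def T : V →ₗ[ℝ] V where
  toFun x := WithLp.toLp 2 (X.mulVec x)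
  map_add' x y := by rw [WithLp.ofLp_add, X.mulVec_add]; rfl
  map_smul' c x := by rw [WithLp.ofLp_smul, X.mulVec_smul]; rfl

lemma T_apply (x : V) (i : Fin 3) : T X x i = ∑ j, X i j * x j := by
  simp [T, Matrix.mulVec, dotProduct]

lemma T_mulr (x : V) (q : ℍ) : T X (mulr x q) = mulr (T X x) q := by
  ext1 i
  simp only [T_apply, mulr, Finset.sum_mul, mul_assoc]

lemma T_symm (hX : Xᴴ = X) : (T X).IsSymmetric := by
  intro x y
  have hstar : ∀ i j, star (X i j) = X j i := by
    intro i j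
    conv_rhs => rw [← hX]
    simp [Matrix.conjTranspose_apply]
  simp only [PiLp.inner_apply, Quaternion.inner_def, T_apply]
  calc ∑ i, ((∑ j, X i j * x j) * star (y i)).re
      = ∑ i, ∑ j, (X i j * x j * star (y i)).re := by
        refine Finset.sum_congr rfl fun i _ => ?_
        rw [Finset.sum_mul, re_sum]
    _ = ∑ j, ∑ i, (X i j * x j * star (y i)).re := Finset.sum_comm
    _ = ∑ j, (x j * star (∑ k, X j k * y k)).re := by
        refine Finset.sum_congr rfl fun j _ => ?_
        rw [star_sum, Finset.mul_sum, re_sum]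
        refine Finset.sum_congr rfl fun k _ => ?_
        rw [re_cyc, StarMul.star_mul, hstar j k, re_mul_comm (x j)]


/-- the four basis quaternions -/
def qb : Fin 4 → ℍ := ![1, ⟨0,1,0,0⟩, ⟨0,0,1,0⟩, ⟨0,0,0,1⟩]

lemma quat_zero (c : ℍ) (h : ∀ t : Fin 4, (qb t * c).re = 0) : c = 0 := by
  have h0 := h 0; have h1 := h 1; have h2 := h 2; have h3 := h 3
  simp [qb, Quaternion.re_mul, QuaternionAlgebra.re_mul, Fin.isValue, Matrix.cons_val_zero, Matrix.cons_val_one] at h0 h1 h2 h3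
  erw [QuaternionAlgebra.re_mul] at h1 h2 h3; simp at h1 h2 h3
  apply Quaternion.ext <;> change _ = (0:ℝ) <;> linarith

lemma exists_eigvec {E : Type*} [NormedAddCommGroup E] [InnerProductSpace ℝ E]
    [FiniteDimensional ℝ E]
    (T : E →ₗ[ℝ] E) (hT : T.IsSymmetric) (S : Submodule ℝ E) (hS : ∀ x ∈ S, T x ∈ S)
    (hS0 : S ≠ ⊥) : ∃ v : E, v ∈ S ∧ ‖v‖ = 1 ∧ ∃ μ : ℝ, T v = μ • v := by
  set T' : S →ₗ[ℝ] S := T.restrict hS with hT'def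
  have hT' : T'.IsSymmetric := by
    intro a b
    have h := hT (a : E) (b : E)
    simpa [hT'def, Submodule.coe_inner] using h
  have hpos : 0 < Module.finrank ℝ S :=
    Nat.pos_of_ne_zero fun h => hS0 (Submodule.finrank_eq_zero.1 h)
  let b := hT'.eigenvectorBasis rfl
  let i : Fin (Module.finrank ℝ S) := ⟨0, hpos⟩
  have hev := hT'.hasEigenvector_eigenvectorBasis rfl i
  refine ⟨(b i : E), (b i).2, ?_, hT'.eigenvalues rfl i, ?_⟩
  · exact (b.orthonormal).1 i
  · have h := hev.apply_eq_smul
    calc T ((b i : S) : E) = ((T' (b i) : S) : E) := (T.restrict_coe_apply hS (b i)).symm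
      _ = ((hT'.eigenvalues rfl i • b i : S) : E) := by rw [h]; norm_cast
      _ = hT'.eigenvalues rfl i • ((b i : S) : E) := rfl


lemma inner_mulr (u w : V) (q : ℍ) : ⟪mulr u q, w⟫ = (q * qInner w u).re := by
  rw [inner_eq_qInner]
  simp only [qInner, mulr]
  rw [Finset.mul_sum, re_sum, re_sum]
  refine Finset.sum_congr rfl fun i _ => ?_
  rw [← mul_assoc, re_cyc, mul_assoc]

lemma qInner_self (u : V) (hu : ‖u‖ = 1) : qInner u u = 1 := by
  have h1 : (⟪u, u⟫ : ℝ) = 1 := by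
    rw [real_inner_self_eq_norm_sq, hu]; norm_num
  have h2 : ∑ i, Quaternion.normSq (u i) = 1 := by
    rw [← h1, PiLp.inner_apply]
    exact Finset.sum_congr rfl fun i _ => (Quaternion.inner_self (u i)).symm
  calc qInner u u = ∑ i, ((Quaternion.normSq (u i) : ℝ) : ℍ) :=
        Finset.sum_congr rfl fun i _ => Quaternion.star_mul_self (u i)
    _ = ((∑ i, Quaternion.normSq (u i) : ℝ) : ℍ) := by
        simp [Fin.sum_univ_three, ← Quaternion.coe_add]
    _ = 1 := by rw [h2]; norm_cast

/-- real span of the quaternionic line through u -/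
def K (u : V) : Submodule ℝ V := Submodule.span ℝ (Set.range fun t => mulr u (qb t))

lemma finrank_K_le (u : V) : Module.finrank ℝ (K u) ≤ 4 := by
  have h := finrank_range_le_card (R := ℝ) fun t => mulr u (qb t)
  simp only [Fintype.card_fin] at h
  exact h

lemma finrank_V : Module.finrank ℝ V = 12 := by
  rw [(WithLp.linearEquiv 2 ℝ (∀ _ : Fin 3, ℍ)).finrank_eq, Module.finrank_pi_fintype]
  simp [Quaternion.finrank_eq_four]

lemma K_maps (u : V) (μ : ℝ) (hu : T X u = μ • u) : ∀ x ∈ K u, T X x ∈ K u := by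
  intro x hx
  have : Submodule.map (T X) (K u) ≤ K u := by
    rw [K, Submodule.map_span_le]
    rintro - ⟨t, rfl⟩
    rw [T_mulr, hu, mulr_smul]
    exact Submodule.smul_mem _ _ (Submodule.subset_span ⟨t, rfl⟩)
  exact this ⟨x, hx, rfl⟩

lemma orthogonal_invariant {E : Type*} [NormedAddCommGroup E] [InnerProductSpace ℝ E]
    (T : E →ₗ[ℝ] E) (hT : T.IsSymmetric) (Km : Submodule ℝ E)
    (hK : ∀ x ∈ Km, T x ∈ Km) : ∀ x ∈ Kmᗮ, T x ∈ Kmᗮ := by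
  intro x hx
  rw [Submodule.mem_orthogonal]
  intro g hg
  rw [← hT g x]
  exact (Submodule.mem_orthogonal _ _).1 hx _ (hK g hg)

lemma qInner_zero_of_orth (u w : V) (h : w ∈ (K u)ᗮ) :
    qInner w u = 0 ∧ qInner u w = 0 := by
  have hz : qInner w u = 0 := by
    apply quat_zero
    intro t
    rw [← inner_mulr]
    exact (Submodule.mem_orthogonal _ _).1 h _
      (Submodule.subset_span ⟨t, rfl⟩)
  exact ⟨hz, by rw [← star_qInner, hz, star_zero]⟩

end QH3

open QH3

theorem hermitian_3x3_quaternionic_diagonalizable_by_Sp3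
    (X : Matrix (Fin 3) (Fin 3) ℍ) (hX : Xᴴ = X) :
    ∃ A : Matrix (Fin 3) (Fin 3) ℍ, Aᴴ * A = 1 ∧
      ∃ ξ : Fin 3 → ℝ, A * X * Aᴴ = Matrix.diagonal (fun i => (ξ i : ℍ)) := by
  have hsym := T_symm X hX
  have htop : (⊤ : Submodule ℝ V) ≠ ⊥ := by
    intro h
    have h12 := finrank_V
    rw [← finrank_top ℝ V, h, finrank_bot] at h12
    norm_num at h12
  obtain ⟨u1, -, hn1, μ1, he1⟩ := exists_eigvec (T X) hsym ⊤ (fun x _ => Submodule.mem_top) htop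
  have hK1 := K_maps X u1 μ1 he1
  have hK1ne : (K u1)ᗮ ≠ ⊥ := by
    intro h
    have hsum := Submodule.finrank_add_finrank_orthogonal (K := K u1)
    rw [h, finrank_bot, finrank_V] at hsum
    have := finrank_K_le u1
    omega
  obtain ⟨u2, hm2, hn2, μ2, he2⟩ := exists_eigvec (T X) hsym (K u1)ᗮ
    (orthogonal_invariant (T X) hsym _ hK1) hK1ne
  have hK2 := K_maps X u2 μ2 he2
  have hK2inv : ∀ x ∈ K u1 ⊔ K u2, T X x ∈ K u1 ⊔ K u2 := by
    intro x hx
    rcases Submodule.mem_sup.1 hx with ⟨y, hy, z, hz, rfl⟩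
    rw [map_add]
    exact Submodule.add_mem_sup (hK1 y hy) (hK2 z hz)
  have hK2ne : (K u1 ⊔ K u2)ᗮ ≠ ⊥ := by
    intro h
    have hsum := Submodule.finrank_add_finrank_orthogonal (K := K u1 ⊔ K u2)
    rw [h, finrank_bot, finrank_V] at hsum
    have h1 := finrank_K_le u1
    have h2 := finrank_K_le u2
    have h3 := Submodule.finrank_add_le_finrank_add_finrank (K u1) (K u2)
    omega
  obtain ⟨u3, hm3, hn3, μ3, he3⟩ := exists_eigvec (T X) hsym (K u1 ⊔ K u2)ᗮ
    (orthogonal_invariant (T X) hsym _ hK2inv) hK2ne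
  obtain ⟨h21, h12'⟩ := qInner_zero_of_orth u1 u2 hm2
  have hm31 : u3 ∈ (K u1)ᗮ := Submodule.orthogonal_le le_sup_left hm3
  have hm32 : u3 ∈ (K u2)ᗮ := Submodule.orthogonal_le le_sup_right hm3
  obtain ⟨h31, h13⟩ := qInner_zero_of_orth u1 u3 hm31
  obtain ⟨h32, h23⟩ := qInner_zero_of_orth u2 u3 hm32
  set u : Fin 3 → V := ![u1, u2, u3] with hu
  set ξ : Fin 3 → ℝ := ![μ1, μ2, μ3] with hξ
  have hortho : ∀ a b, qInner (u a) (u b) = if a = b then 1 else 0 := by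
    intro a b
    fin_cases a <;> fin_cases b <;>
      simp [hu, qInner_self _ hn1, qInner_self _ hn2, qInner_self _ hn3,
        h21, h12', h31, h13, h32, h23]
  have heig : ∀ b, T X (u b) = ξ b • u b := by
    intro b
    fin_cases b <;>
      simp only [hu, hξ, Matrix.cons_val_zero, Matrix.cons_val_one, Matrix.head_cons,
        Matrix.cons_val_two, Matrix.tail_cons] <;> assumption
  set A : Matrix (Fin 3) (Fin 3) ℍ := Matrix.of (fun a j => star (u a j)) with hA
  have hAH : ∀ j b, Aᴴ j b = u b j := by
    intro j b; simp [hA, Matrix.conjTranspose_apply]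
  have hAAH : A * Aᴴ = 1 := by
    refine Matrix.ext fun a b => ?_
    rw [Matrix.mul_apply, Matrix.one_apply, ← hortho a b]
    exact Finset.sum_congr rfl fun j _ => by rw [hAH]; rfl
  have hA1 : Aᴴ * A = 1 := by
    have hsurj : Function.Surjective (LinearMap.mulLeft ℝ A) := fun Y =>
      ⟨Aᴴ * Y, by rw [LinearMap.mulLeft_apply, ← Matrix.mul_assoc, hAAH, Matrix.one_mul]⟩
    have hinj : Function.Injective (LinearMap.mulLeft ℝ A) :=
      (LinearMap.injective_iff_surjective).2 hsurj
    apply hinj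
    show A * (Aᴴ * A) = A * 1
    rw [← Matrix.mul_assoc, hAAH, Matrix.one_mul, Matrix.mul_one]
  refine ⟨A, hA1, ξ, ?_⟩
  rw [Matrix.mul_assoc]
  refine Matrix.ext fun a b => ?_
  have hXA : ∀ j, (X * Aᴴ) j b = ξ b • u b j := by
    intro j
    rw [Matrix.mul_apply]
    have h : ∑ k, X j k * Aᴴ k b = T X (u b) j := by
      rw [T_apply]; exact Finset.sum_congr rfl fun k _ => by rw [hAH]
    rw [h, heig b]; rfl
  rw [Matrix.mul_apply]
  calc ∑ j, A a j * (X * Aᴴ) j b = ξ b • qInner (u a) (u b) := by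
        rw [qInner, Finset.smul_sum]
        refine Finset.sum_congr rfl fun j _ => ?_
        rw [hXA j, mul_smul_comm]; rfl
    _ = Matrix.diagonal (fun i => ((ξ i : ℝ) : ℍ)) a b := by
        rw [hortho]
        by_cases hab : a = b
        · subst hab
          simp [Matrix.diagonal_apply_eq, ← Quaternion.coe_one, Quaternion.smul_coe]
        · simp [Matrix.diagonal_apply_ne _ hab, hab]
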